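/- Let E be a directed graph, A a C*-algebra, {S_e, P_v} a Cuntz-Krieger E-family in A, and let v, w ∈ E⁰ be two distinct sinks of E (vertices with s⁻¹(v) = s⁻¹(w) = ∅). Let C*(S, P) denote the C*-subalgebra of A generated by {S_e : e ∈ E¹} ∪ {P_v : v ∈ E⁰}, and let I_v and I_w be the closed two-sided ideals of C*(S, P) generated by P_v and P_w respectively. Then I_v and I_w are mutually orthogonal: a·b = 0 for all a ∈ I_v and b ∈ I_w (in particular I_v ∩ I_w = {0}). -/
import Mathlib


/-- A (countable) directed graph `E = (E⁰, E¹, r, s)`: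
a set of vertices, a set of edges, and range and source maps. -/
structure Digraph' where
  V : Type
  E : Type
  src : E → V
  rng : E → V

namespace Digraph'

variable (G : Digraph')

/-- `v ≥ w`: there is a path (possibly of length zero) from `v` to `w`. -/
def Reach (v w : G.V) : Prop :=
  Relation.ReflTransGen (fun a b : G.V => ∃ e : G.E, G.src e = a ∧ G.rng e = b) v w

/-- A set `H` of vertices is hereditary if `v ∈ H` and `v ≥ w` imply `w ∈ H`. -/
def Hereditary (H : Set G.V) : Prop :=
  ∀ ⦃v w : G.V⦄, v ∈ H → G.Reach v w → w ∈ H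

/-- A set `X` of vertices is saturated if every vertex `v` with `0 < |s⁻¹(v)| < ∞`
all of whose emitted edges have range in `X` itself belongs to `X`. -/
def Saturated (X : Set G.V) : Prop :=
  ∀ v : G.V, (G.src ⁻¹' {v}).Finite → (G.src ⁻¹' {v}).Nonempty →
    (∀ e : G.E, G.src e = v → G.rng e ∈ X) → v ∈ X

/-- The saturation `Σ(X)`: the smallest saturated set containing `X`. -/
def saturation (X : Set G.V) : Set G.V :=
  ⋂₀ {Y : Set G.V | G.Saturated Y ∧ X ⊆ Y}

/-- `ΣH(X)`: the smallest saturated hereditary set containing `X`. -/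
def satHered (X : Set G.V) : Set G.V :=
  ⋂₀ {Y : Set G.V | G.Saturated Y ∧ G.Hereditary Y ∧ X ⊆ Y}

end Digraph'

namespace Digraph'

/-- A Cuntz-Krieger `E`-family in a C*-algebra `A`: mutually orthogonal projections
`P v`, elements `S e` with mutually orthogonal range projections, satisfying the
Cuntz-Krieger relations (G1)–(G3). -/
structure IsCKFamily (G : Digraph') {A : Type*} [NonUnitalCStarAlgebra A]
    [PartialOrder A] [StarOrderedRing A] (P : G.V → A) (S : G.E → A) : Prop where
  proj_star : ∀ v : G.V, star (P v) = P v
  proj_idem : ∀ v : G.V, P v * P v = P v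
  proj_orth : ∀ v w : G.V, v ≠ w → P v * P w = 0
  range_orth : ∀ e f : G.E, e ≠ f → (S e * star (S e)) * (S f * star (S f)) = 0
  ck1 : ∀ e : G.E, star (S e) * S e = P (G.rng e)
  ck2 : ∀ e : G.E, S e * star (S e) ≤ P (G.src e)
  ck3 : ∀ v : G.V, (G.src ⁻¹' {v}).Finite → (G.src ⁻¹' {v}).Nonempty →
    P v = ∑ᶠ e ∈ G.src ⁻¹' {v}, S e * star (S e)

end Digraph'

/-- `J` is a closed two-sided ideal of the subalgebra (given as the subset `B`)
of the ambient C*-algebra. -/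
def IsClosedIdealOf {A : Type*} [NonUnitalCStarAlgebra A] (B J : Set A) : Prop :=
  J ⊆ B ∧ IsClosed J ∧ (0 : A) ∈ J ∧
  (∀ a b : A, a ∈ J → b ∈ J → a + b ∈ J) ∧
  (∀ (c : ℂ) (a : A), a ∈ J → c • a ∈ J) ∧
  (∀ b a : A, b ∈ B → a ∈ J → b * a ∈ J ∧ a * b ∈ J)

/-- The closed two-sided ideal of the subalgebra `B` generated by a subset `X`. -/
def closedIdealGenIn {A : Type*} [NonUnitalCStarAlgebra A] (B X : Set A) : Set A :=
  ⋂₀ {J : Set A | IsClosedIdealOf B J ∧ X ⊆ J}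

/-- The C*-subalgebra `C*(S, P)` of `A` generated by a Cuntz-Krieger family,
regarded as a subset of `A`: the closure of the non-unital star subalgebra
generated by the `S e` and the `P v`. -/
def cstarSP {A : Type*} [NonUnitalCStarAlgebra A] (G : Digraph')
    (P : G.V → A) (S : G.E → A) : Set A :=
  closure ((NonUnitalStarAlgebra.adjoin ℂ (Set.range S ∪ Set.range P) :
    NonUnitalStarSubalgebra ℂ A) : Set A)


section CKAux

open Digraph'

variable {G : Digraph'} {A : Type*} [NonUnitalCStarAlgebra A]
  [PartialOrder A] [StarOrderedRing A] {P : G.V → A} {S : G.E → A}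

lemma ckaux_proj_mul_of_le {p q : A} (hp : star p = p) (hpi : p * p = p)
    (hq : star q = q) (hqi : q * q = q) (hle : q ≤ p) : p * q = q ∧ q * p = q := by
  have h1 : q ≤ q * p * q := by
    have h := star_left_conjugate_le_conjugate hle q
    rw [hq] at h
    calc q = q * q * q := by rw [hqi, hqi]
    _ ≤ q * p * q := h
  have h2 : q * p * q ≤ q := by
    have hnn : (0:A) ≤ star (q - p * q) * (q - p * q) := star_mul_self_nonneg _
    have e0 : star (q - p * q) = q - q * p := by
      rw [star_sub, star_mul, hp, hq]
    have e1 : (q * p) * (p * q) = q * p * q := by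
      rw [← mul_assoc, mul_assoc q p p, hpi]
    have e2 : (q - q * p) * (q - p * q)
        = q * q - q * (p * q) - ((q * p) * q - (q * p) * (p * q)) := by noncomm_ring
    rw [e0, e2, hqi, e1, ← mul_assoc q p q] at hnn
    simp only [sub_self, sub_zero] at hnn
    exact sub_nonneg.mp hnn
  have h3 : q * p * q = q := le_antisymm h2 h1
  have h4 : p * q = q := by
    have key : star (p * q - q) * (p * q - q) = 0 := by
      have e0 : star (p * q - q) = q * p - q := by rw [star_sub, star_mul, hp, hq]
      have e1 : (q * p) * (p * q) = q * p * q := by rw [← mul_assoc, mul_assoc q p p, hpi]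
      have e2 : (q * p - q) * (p * q - q)
          = (q * p) * (p * q) - (q * p) * q - (q * (p * q) - q * q) := by noncomm_ring
      rw [e0, e2, e1, ← mul_assoc q p q, hqi, h3]
      simp
    exact sub_eq_zero.mp ((CStarRing.star_mul_self_eq_zero_iff _).mp key)
  refine ⟨h4, ?_⟩
  have h5 : q * p = star (p * q) := by rw [star_mul, hp, hq]
  rw [h5, h4, hq]

lemma ckaux_SP (hCK : G.IsCKFamily P S) (e : G.E) : S e * P (G.rng e) = S e := by
  have hp := hCK.proj_star (G.rng e)
  have hpi := hCK.proj_idem (G.rng e)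
  have h1 := hCK.ck1 e
  have key : star (S e * P (G.rng e) - S e) * (S e * P (G.rng e) - S e) = 0 := by
    have e0 : star (S e * P (G.rng e) - S e) = P (G.rng e) * star (S e) - star (S e) := by
      rw [star_sub, star_mul, hp]
    have e2 : (P (G.rng e) * star (S e) - star (S e)) * (S e * P (G.rng e) - S e)
        = P (G.rng e) * (star (S e) * S e) * P (G.rng e) - P (G.rng e) * (star (S e) * S e)
          - ((star (S e) * S e) * P (G.rng e) - star (S e) * S e) := by noncomm_ring
    rw [e0, e2, h1]
    simp only [hpi]
    simp
  exact sub_eq_zero.mp ((CStarRing.star_mul_self_eq_zero_iff _).mp key)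

lemma ckaux_SSS (hCK : G.IsCKFamily P S) (e : G.E) : S e * star (S e) * S e = S e := by
  rw [mul_assoc, hCK.ck1]
  exact ckaux_SP hCK e

lemma ckaux_PS_eq (hCK : G.IsCKFamily P S) (f : G.E) : P (G.src f) * S f = S f := by
  have hq1 : star (S f * star (S f)) = S f * star (S f) := by
    rw [star_mul, star_star]
  have hq2 : (S f * star (S f)) * (S f * star (S f)) = S f * star (S f) := by
    rw [← mul_assoc, ckaux_SSS hCK f]
  have h := (ckaux_proj_mul_of_le (hCK.proj_star _) (hCK.proj_idem _) hq1 hq2 (hCK.ck2 f)).1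
  calc P (G.src f) * S f = P (G.src f) * (S f * star (S f) * S f) := by rw [ckaux_SSS hCK f]
  _ = (P (G.src f) * (S f * star (S f))) * S f := by rw [← mul_assoc]
  _ = (S f * star (S f)) * S f := by rw [h]
  _ = S f := ckaux_SSS hCK f

lemma ckaux_PS_ne (hCK : G.IsCKFamily P S) {u : G.V} {f : G.E} (h : u ≠ G.src f) :
    P u * S f = 0 := by
  rw [← ckaux_PS_eq hCK f, ← mul_assoc, hCK.proj_orth u (G.src f) h, zero_mul]

lemma ckaux_PS_sink (hCK : G.IsCKFamily P S) {v : G.V} (hv : G.src ⁻¹' {v} = ∅) (f : G.E) :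
    P v * S f = 0 := by
  refine ckaux_PS_ne hCK fun h => ?_
  have hf : f ∈ G.src ⁻¹' {v} := by simp [Set.mem_preimage, h.symm]
  simp [hv] at hf

lemma ckaux_SstarS (hCK : G.IsCKFamily P S) {e f : G.E} (h : e ≠ f) : star (S e) * S f = 0 := by
  have hse : star (S e) * (S e * star (S e)) = star (S e) := by
    rw [← mul_assoc, hCK.ck1]
    calc P (G.rng e) * star (S e) = star (S e * P (G.rng e)) := by
          rw [star_mul, hCK.proj_star]
    _ = star (S e) := by rw [ckaux_SP hCK e]
  calc star (S e) * S f
      = (star (S e) * (S e * star (S e))) * ((S f * star (S f)) * S f) := by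
        rw [hse, ckaux_SSS hCK f]
    _ = star (S e) * ((S e * star (S e)) * (S f * star (S f))) * S f := by
        simp only [mul_assoc]
    _ = 0 := by rw [hCK.range_orth e f h]; simp

lemma ckaux_cl_P (hCK : G.IsCKFamily P S) (u : G.V) {x : A}
    (hx : x ∈ Subsemigroup.closure (Set.range S)) :
    star x * P u = 0 ∨ ∃ y ∈ Subsemigroup.closure (Set.range S), star x * P u = star y := by
  induction hx using Subsemigroup.closure_induction with
  | mem x hx =>
    obtain ⟨f, rfl⟩ := hx
    have key : star (S f) * P u = star (P u * S f) := by
      rw [star_mul, hCK.proj_star]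
    by_cases h : u = G.src f
    · right
      exact ⟨S f, Subsemigroup.subset_closure ⟨f, rfl⟩,
        by rw [key, h, ckaux_PS_eq hCK]⟩
    · left
      rw [key, ckaux_PS_ne hCK h, star_zero]
  | mul a b ha hb pa pb =>
    have e0 : star (a * b) * P u = star b * (star a * P u) := by
      rw [star_mul, mul_assoc]
    rcases pa with h0 | ⟨y, hy, hEq⟩
    · left; rw [e0, h0, mul_zero]
    · right
      exact ⟨y * b, mul_mem hy hb, by rw [e0, hEq, ← star_mul]⟩

lemma ckaux_cl_P_sink (hCK : G.IsCKFamily P S) {w : G.V} (hw : G.src ⁻¹' {w} = ∅) {x : A}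
    (hx : x ∈ Subsemigroup.closure (Set.range S)) : star x * P w = 0 := by
  induction hx using Subsemigroup.closure_induction with
  | mem x hx =>
    obtain ⟨f, rfl⟩ := hx
    rw [show star (S f) * P w = star (P w * S f) by rw [star_mul, hCK.proj_star],
      ckaux_PS_sink hCK hw, star_zero]
  | mul a b ha hb pa pb =>
    rw [star_mul, mul_assoc, pa, mul_zero]

lemma ckaux_cl_S (hCK : G.IsCKFamily P S) (f : G.E) {x : A}
    (hx : x ∈ Subsemigroup.closure (Set.range S)) :
    star x * S f = 0 ∨ star x * S f = P (G.rng f) ∨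
      ∃ y ∈ Subsemigroup.closure (Set.range S), star x * S f = star y := by
  induction hx using Subsemigroup.closure_induction with
  | mem x hx =>
    obtain ⟨e, rfl⟩ := hx
    by_cases h : e = f
    · subst h; right; left; exact hCK.ck1 e
    · left; exact ckaux_SstarS hCK h
  | mul a b ha hb pa pb =>
    have e0 : star (a * b) * S f = star b * (star a * S f) := by rw [star_mul, mul_assoc]
    rcases pa with h0 | hP | ⟨y, hy, hEq⟩
    · left; rw [e0, h0, mul_zero]
    · rcases ckaux_cl_P hCK (G.rng f) hb with h0 | ⟨y, hy, hEq⟩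
      · left; rw [e0, hP, h0]
      · right; right; exact ⟨y, hy, by rw [e0, hP, hEq]⟩
    · right; right; exact ⟨y * b, mul_mem hy hb, by rw [e0, hEq, ← star_mul]⟩

end CKAux

/-- If `v` and `w` are distinct sinks, then the closed two-sided ideals
`I_v` and `I_w` of `C*(S, P)` generated by `P v` and `P w` are mutually orthogonal;
in particular their intersection is `{0}`. -/
theorem stmt_14 (G : Digraph') [Countable G.V] [Countable G.E]
    {A : Type*} [NonUnitalCStarAlgebra A] [PartialOrder A] [StarOrderedRing A]
    (P : G.V → A) (S : G.E → A) (hCK : G.IsCKFamily P S)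
    (v w : G.V) (hvw : v ≠ w)
    (hv : G.src ⁻¹' {v} = ∅) (hw : G.src ⁻¹' {w} = ∅) :
    (∀ a ∈ closedIdealGenIn (cstarSP G P S) {P v},
      ∀ b ∈ closedIdealGenIn (cstarSP G P S) {P w}, a * b = 0) ∧
    closedIdealGenIn (cstarSP G P S) {P v} ∩
      closedIdealGenIn (cstarSP G P S) {P w} = {0} := by
  classical
  set B : Set A := cstarSP G P S with hB
  have hmemB : ∀ a : A, a ∈ B ↔ a ∈ (NonUnitalStarAlgebra.adjoin ℂ
      (Set.range S ∪ Set.range P) : NonUnitalStarSubalgebra ℂ A).topologicalClosure :=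
    fun _ => Iff.rfl
  have hBclosed : IsClosed B := isClosed_closure
  have hB0 : (0:A) ∈ B := (hmemB 0).mpr (zero_mem _)
  have hBadd : ∀ a b : A, a ∈ B → b ∈ B → a + b ∈ B :=
    fun a b ha hb => (hmemB _).mpr (add_mem ((hmemB a).mp ha) ((hmemB b).mp hb))
  have hBsmul : ∀ (c : ℂ) (a : A), a ∈ B → c • a ∈ B :=
    fun c a ha => (hmemB _).mpr (SMulMemClass.smul_mem c ((hmemB a).mp ha))
  have hBmul : ∀ a b : A, a ∈ B → b ∈ B → a * b ∈ B :=
    fun a b ha hb => (hmemB _).mpr (mul_mem ((hmemB a).mp ha) ((hmemB b).mp hb))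
  have hBstar : ∀ a : A, a ∈ B → star a ∈ B :=
    fun a ha => (hmemB _).mpr (star_mem ((hmemB a).mp ha))
  have hPB : ∀ u : G.V, P u ∈ B := fun u =>
    (hmemB _).mpr (NonUnitalStarSubalgebra.le_topologicalClosure _
      (NonUnitalStarAlgebra.subset_adjoin ℂ _ (Or.inr ⟨u, rfl⟩)))
  have hSB : ∀ e : G.E, S e ∈ B := fun e =>
    (hmemB _).mpr (NonUnitalStarSubalgebra.le_topologicalClosure _
      (NonUnitalStarAlgebra.subset_adjoin ℂ _ (Or.inl ⟨e, rfl⟩)))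
  -- the right module R = closure of span of { P v } ∪ { P v * (S_μ)* }
  set Wv : Set A :=
    insert (P v) {a : A | ∃ x ∈ Subsemigroup.closure (Set.range S), a = P v * star x} with hWv
  set N : Submodule ℂ A := (Submodule.span ℂ Wv).topologicalClosure with hN
  have hNclosed : IsClosed (N : Set A) := Submodule.isClosed_topologicalClosure _
  have hWN : Wv ⊆ (N : Set A) := fun x hx =>
    Submodule.le_topologicalClosure _ (Submodule.subset_span hx)
  have hPvN : P v ∈ N := hWN (Set.mem_insert _ _)
  have hmap : ∀ g : A, (∀ x ∈ Wv, x * g ∈ N) → ∀ r ∈ N, r * g ∈ N := by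
    intro g hg r hr
    have hsub : Submodule.span ℂ Wv ≤ N.comap (LinearMap.mulRight ℂ g) :=
      Submodule.span_le.mpr (fun x hx => hg x hx)
    have hcl2 : IsClosed ((N.comap (LinearMap.mulRight ℂ g) : Submodule ℂ A) : Set A) := by
      have hpre : ((N.comap (LinearMap.mulRight ℂ g) : Submodule ℂ A) : Set A)
          = (fun b : A => b * g) ⁻¹' (N : Set A) := rfl
      rw [hpre]
      exact hNclosed.preimage (continuous_mul_right g)
    exact Submodule.topologicalClosure_minimal _ hsub hcl2 hr
  have hmap0 : ∀ g : A, (∀ x ∈ Wv, x * g = 0) → ∀ r ∈ N, r * g = 0 := by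
    intro g hg r hr
    have hsub : Submodule.span ℂ Wv ≤ LinearMap.ker (LinearMap.mulRight ℂ g) :=
      Submodule.span_le.mpr (fun x hx => hg x hx)
    have hcl2 : IsClosed ((LinearMap.ker (LinearMap.mulRight ℂ g) : Submodule ℂ A) : Set A) := by
      have hpre : ((LinearMap.ker (LinearMap.mulRight ℂ g) : Submodule ℂ A) : Set A)
          = (fun b : A => b * g) ⁻¹' {0} := rfl
      rw [hpre]
      exact isClosed_singleton.preimage (continuous_mul_right g)
    exact Submodule.topologicalClosure_minimal _ hsub hcl2 hr
  have hWmulP : ∀ u : G.V, ∀ a ∈ Wv, a * P u ∈ N := by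
    intro u a ha
    rcases Set.mem_insert_iff.mp ha with rfl | ⟨y, hy, rfl⟩
    · by_cases h : v = u
      · subst h; rw [hCK.proj_idem]; exact hPvN
      · rw [hCK.proj_orth v u h]; exact zero_mem N
    · rw [mul_assoc]
      rcases ckaux_cl_P hCK u hy with h0 | ⟨z, hz, hEq⟩
      · rw [h0, mul_zero]; exact zero_mem N
      · rw [hEq]; exact hWN (Set.mem_insert_iff.mpr (Or.inr ⟨z, hz, rfl⟩))
  have hWmulS : ∀ f : G.E, ∀ a ∈ Wv, a * S f ∈ N := by
    intro f a ha
    rcases Set.mem_insert_iff.mp ha with rfl | ⟨y, hy, rfl⟩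
    · rw [ckaux_PS_sink hCK hv f]; exact zero_mem N
    · rw [mul_assoc]
      rcases ckaux_cl_S hCK f hy with h0 | hP | ⟨z, hz, hEq⟩
      · rw [h0, mul_zero]; exact zero_mem N
      · rw [hP]
        by_cases h : v = G.rng f
        · rw [← h, hCK.proj_idem]; exact hPvN
        · rw [hCK.proj_orth _ _ h]; exact zero_mem N
      · rw [hEq]; exact hWN (Set.mem_insert_iff.mpr (Or.inr ⟨z, hz, rfl⟩))
  have hWmulSstar : ∀ f : G.E, ∀ a ∈ Wv, a * star (S f) ∈ N := by
    intro f a ha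
    rcases Set.mem_insert_iff.mp ha with rfl | ⟨y, hy, rfl⟩
    · exact hWN (Set.mem_insert_iff.mpr
        (Or.inr ⟨S f, Subsemigroup.subset_closure ⟨f, rfl⟩, rfl⟩))
    · rw [mul_assoc, ← star_mul]
      exact hWN (Set.mem_insert_iff.mpr
        (Or.inr ⟨S f * y, mul_mem (Subsemigroup.subset_closure ⟨f, rfl⟩) hy, rfl⟩))
  have hNmulP : ∀ u : G.V, ∀ r ∈ N, r * P u ∈ N := fun u => hmap (P u) (hWmulP u)
  have hNmulS : ∀ f : G.E, ∀ r ∈ N, r * S f ∈ N := fun f => hmap (S f) (hWmulS f)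
  have hNmulSstar : ∀ f : G.E, ∀ r ∈ N, r * star (S f) ∈ N :=
    fun f => hmap (star (S f)) (hWmulSstar f)
  -- every element of B stabilizes N on the right
  have hgenC : ∀ b ∈ B, ∀ r ∈ N, r * b ∈ N ∧ r * star b ∈ N := by
    have hstep : ∀ a ∈ ((NonUnitalStarAlgebra.adjoin ℂ (Set.range S ∪ Set.range P) :
        NonUnitalStarSubalgebra ℂ A) : Set A),
        a ∈ {b : A | ∀ r ∈ N, r * b ∈ N ∧ r * star b ∈ N} := by
      intro a ha
      induction ha using NonUnitalStarAlgebra.adjoin_induction with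
      | mem x hx =>
        rcases hx with ⟨e, rfl⟩ | ⟨u, rfl⟩
        · exact fun r hr => ⟨hNmulS e r hr, hNmulSstar e r hr⟩
        · intro r hr
          refine ⟨hNmulP u r hr, ?_⟩
          rw [hCK.proj_star]; exact hNmulP u r hr
      | add x y hx hy px py =>
        intro r hr
        constructor
        · rw [mul_add]; exact add_mem (px r hr).1 (py r hr).1
        · rw [star_add, mul_add]; exact add_mem (px r hr).2 (py r hr).2
      | zero =>
        intro r hr
        constructor
        · rw [mul_zero]; exact zero_mem N
        · rw [star_zero, mul_zero]; exact zero_mem N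
      | mul x y hx hy px py =>
        intro r hr
        constructor
        · rw [← mul_assoc]; exact (py _ (px r hr).1).1
        · rw [star_mul, ← mul_assoc]; exact (px _ (py r hr).2).2
      | smul c x hx px =>
        intro r hr
        constructor
        · rw [mul_smul_comm]; exact Submodule.smul_mem N c (px r hr).1
        · rw [star_smul, mul_smul_comm]; exact Submodule.smul_mem N _ (px r hr).2
      | star x hx px =>
        intro r hr
        exact ⟨(px r hr).2, by rw [star_star]; exact (px r hr).1⟩
    have hCclosed : IsClosed {b : A | ∀ r ∈ N, r * b ∈ N ∧ r * star b ∈ N} := by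
      have heq : {b : A | ∀ r ∈ N, r * b ∈ N ∧ r * star b ∈ N}
          = ⋂ r ∈ (N : Set A),
            ((fun b : A => r * b) ⁻¹' (N : Set A) ∩ (fun b : A => r * star b) ⁻¹' (N : Set A)) := by
        ext b
        simp only [Set.mem_setOf_eq, Set.mem_iInter, Set.mem_inter_iff, Set.mem_preimage,
          SetLike.mem_coe]
      rw [heq]
      refine isClosed_biInter fun r hr => IsClosed.inter ?_ ?_
      · exact hNclosed.preimage (continuous_mul_left r)
      · exact hNclosed.preimage ((continuous_mul_left r).comp continuous_star)
    exact fun b hb => closure_minimal hstep hCclosed hb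
  have hNB : ∀ b ∈ B, ∀ r ∈ N, r * b ∈ N := fun b hb r hr => (hgenC b hb r hr).1
  -- everything in N kills P w on the right
  have hNPw : ∀ r ∈ N, r * P w = 0 := by
    apply hmap0
    intro a ha
    rcases Set.mem_insert_iff.mp ha with rfl | ⟨y, hy, rfl⟩
    · exact hCK.proj_orth v w hvw
    · rw [mul_assoc, ckaux_cl_P_sink hCK hw hy, mul_zero]
  -- ideal machinery
  have hBB : IsClosedIdealOf B B :=
    ⟨subset_rfl, hBclosed, hB0, hBadd, hBsmul,
      fun b a hb ha => ⟨hBmul b a hb ha, hBmul a b ha hb⟩⟩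
  have hmin : ∀ (X J : Set A), IsClosedIdealOf B J → X ⊆ J → closedIdealGenIn B X ⊆ J :=
    fun X J h1 h2 => Set.sInter_subset_of_mem ⟨h1, h2⟩
  have hgen : ∀ X : Set A, X ⊆ B →
      IsClosedIdealOf B (closedIdealGenIn B X) ∧ X ⊆ closedIdealGenIn B X := by
    intro X hX
    have hBmemF : B ∈ {J : Set A | IsClosedIdealOf B J ∧ X ⊆ J} := ⟨hBB, hX⟩
    constructor
    · refine ⟨Set.sInter_subset_of_mem hBmemF,
        isClosed_sInter (fun J hJ => hJ.1.2.1),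
        Set.mem_sInter.mpr fun J hJ => hJ.1.2.2.1, ?_, ?_, ?_⟩
      · intro a b ha hb
        exact Set.mem_sInter.mpr fun J hJ =>
          hJ.1.2.2.2.1 a b (Set.mem_sInter.mp ha J hJ) (Set.mem_sInter.mp hb J hJ)
      · intro c a ha
        exact Set.mem_sInter.mpr fun J hJ =>
          hJ.1.2.2.2.2.1 c a (Set.mem_sInter.mp ha J hJ)
      · intro b a hb ha
        constructor
        · exact Set.mem_sInter.mpr fun J hJ =>
            (hJ.1.2.2.2.2.2 b a hb (Set.mem_sInter.mp ha J hJ)).1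
        · exact Set.mem_sInter.mpr fun J hJ =>
            (hJ.1.2.2.2.2.2 b a hb (Set.mem_sInter.mp ha J hJ)).2
    · intro x hx
      exact Set.mem_sInter.mpr fun J hJ => hJ.2 hx
  obtain ⟨hIvIdeal, hPvIv⟩ := hgen {P v} (Set.singleton_subset_iff.mpr (hPB v))
  obtain ⟨hIwIdeal, hPwIw⟩ := hgen {P w} (Set.singleton_subset_iff.mpr (hPB w))
  -- K : the elements of B annihilated by N on the left
  have hKIdeal : IsClosedIdealOf B {b : A | b ∈ B ∧ ∀ r ∈ N, r * b = 0} := by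
    refine ⟨fun b hb => hb.1, ?_, ⟨hB0, fun r hr => mul_zero r⟩, ?_, ?_, ?_⟩
    · have heq : {b : A | b ∈ B ∧ ∀ r ∈ N, r * b = 0}
          = B ∩ ⋂ r ∈ (N : Set A), (fun b : A => r * b) ⁻¹' ({0} : Set A) := by
        ext b
        simp only [Set.mem_setOf_eq, Set.mem_inter_iff, Set.mem_iInter, Set.mem_preimage,
          Set.mem_singleton_iff, SetLike.mem_coe]
      rw [heq]
      exact hBclosed.inter
        (isClosed_biInter fun r hr => isClosed_singleton.preimage (continuous_mul_left r))
    · intro a b ha hb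
      exact ⟨hBadd a b ha.1 hb.1,
        fun r hr => by rw [mul_add, ha.2 r hr, hb.2 r hr, add_zero]⟩
    · intro c a ha
      exact ⟨hBsmul c a ha.1, fun r hr => by rw [mul_smul_comm, ha.2 r hr, smul_zero]⟩
    · intro b a hb ha
      constructor
      · exact ⟨hBmul b a hb ha.1, fun r hr => by rw [← mul_assoc]; exact ha.2 _ (hNB b hb r hr)⟩
      · exact ⟨hBmul a b ha.1 hb, fun r hr => by rw [← mul_assoc, ha.2 r hr, zero_mul]⟩
  have hIwK : closedIdealGenIn B {P w} ⊆ {b : A | b ∈ B ∧ ∀ r ∈ N, r * b = 0} :=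
    hmin _ _ hKIdeal (Set.singleton_subset_iff.mpr ⟨hPB w, hNPw⟩)
  have hPvIw0 : ∀ b ∈ closedIdealGenIn B {P w}, P v * b = 0 :=
    fun b hb => (hIwK hb).2 (P v) hPvN
  -- J : the elements of B annihilating I_w on the left
  have hJIdeal : IsClosedIdealOf B
      {a : A | a ∈ B ∧ ∀ b ∈ closedIdealGenIn B {P w}, a * b = 0} := by
    refine ⟨fun a ha => ha.1, ?_, ⟨hB0, fun b hb => zero_mul b⟩, ?_, ?_, ?_⟩
    · have heq : {a : A | a ∈ B ∧ ∀ b ∈ closedIdealGenIn B {P w}, a * b = 0}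
          = B ∩ ⋂ b ∈ closedIdealGenIn B {P w}, (fun a : A => a * b) ⁻¹' ({0} : Set A) := by
        ext a
        simp only [Set.mem_setOf_eq, Set.mem_inter_iff, Set.mem_iInter, Set.mem_preimage,
          Set.mem_singleton_iff]
      rw [heq]
      exact hBclosed.inter
        (isClosed_biInter fun b hb => isClosed_singleton.preimage (continuous_mul_right b))
    · intro a b ha hb
      exact ⟨hBadd a b ha.1 hb.1,
        fun c hc => by rw [add_mul, ha.2 c hc, hb.2 c hc, add_zero]⟩
    · intro c a ha
      exact ⟨hBsmul c a ha.1, fun b hb => by rw [smul_mul_assoc, ha.2 b hb, smul_zero]⟩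
    · intro c a hc ha
      constructor
      · exact ⟨hBmul c a hc ha.1, fun b hb => by rw [mul_assoc, ha.2 b hb, mul_zero]⟩
      · exact ⟨hBmul a c ha.1 hc,
          fun b hb => by rw [mul_assoc]; exact ha.2 _ ((hIwIdeal.2.2.2.2.2 c b hc hb).1)⟩
  have horth : ∀ a ∈ closedIdealGenIn B {P v}, ∀ b ∈ closedIdealGenIn B {P w}, a * b = 0 :=
    fun a ha => (hmin _ _ hJIdeal (Set.singleton_subset_iff.mpr ⟨hPB v, hPvIw0⟩) ha).2
  -- star-closedness of the generated ideals
  have hstarIdeal : ∀ u : G.V, ∀ a ∈ closedIdealGenIn B {P u},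
      star a ∈ closedIdealGenIn B {P u} := by
    intro u a ha
    obtain ⟨hI, hPI⟩ := hgen {P u} (Set.singleton_subset_iff.mpr (hPB u))
    have hI' : IsClosedIdealOf B {x : A | star x ∈ closedIdealGenIn B {P u}} := by
      refine ⟨?_, ?_, ?_, ?_, ?_, ?_⟩
      · intro x hx
        have hxB : star x ∈ B := hI.1 hx
        have := hBstar _ hxB
        rwa [star_star] at this
      · have heq : {x : A | star x ∈ closedIdealGenIn B {P u}}
            = star ⁻¹' (closedIdealGenIn B {P u}) := rfl
        rw [heq]
        exact hI.2.1.preimage continuous_star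
      · show star (0 : A) ∈ closedIdealGenIn B {P u}
        rw [star_zero]; exact hI.2.2.1
      · intro x y hx hy
        show star (x + y) ∈ closedIdealGenIn B {P u}
        rw [star_add]; exact hI.2.2.2.1 _ _ hx hy
      · intro c x hx
        show star (c • x) ∈ closedIdealGenIn B {P u}
        rw [star_smul]; exact hI.2.2.2.2.1 _ _ hx
      · intro b x hb hx
        constructor
        · show star (b * x) ∈ closedIdealGenIn B {P u}
          rw [star_mul]; exact (hI.2.2.2.2.2 (star b) (star x) (hBstar b hb) hx).2
        · show star (x * b) ∈ closedIdealGenIn B {P u}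
          rw [star_mul]; exact (hI.2.2.2.2.2 (star b) (star x) (hBstar b hb) hx).1
    have hPuI' : ({P u} : Set A) ⊆ {x : A | star x ∈ closedIdealGenIn B {P u}} := by
      intro x hx
      rw [Set.mem_singleton_iff] at hx
      subst hx
      show star (P u) ∈ closedIdealGenIn B {P u}
      rw [hCK.proj_star]
      exact hPI rfl
    exact hmin _ _ hI' hPuI' ha
  refine ⟨horth, ?_⟩
  ext a
  simp only [Set.mem_inter_iff, Set.mem_singleton_iff]
  constructor
  · rintro ⟨ha1, ha2⟩
    have h0 : a * star a = 0 := horth a ha1 (star a) (hstarIdeal w a ha2)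
    exact (CStarRing.mul_star_self_eq_zero_iff a).mp h0
  · rintro rfl
    exact ⟨hIvIdeal.2.2.1, hIwIdeal.2.2.1⟩
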